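/- Let K be a finite field of odd order s and let x ∈ K³ be a vector with −Q(x) a nonsquare in K (an internal point of the conic C). The subgroup of the group of similitudes of Q modulo scalar matrices that fixes the projective point [x] (i.e. classes of similitudes A with A·x = λ·x for some λ ∈ K*) has order 2·(s + 1). -/

import Mathlib

open Matrix
open scoped Classical

def quadForm (K : Type*) [CommRing K] (v : Fin 3 → K) : K := v 0 * v 1 - v 2 ^ 2

/-- The group of similitudes of `Q`, as a subgroup of `GL(3,K)`: those `A` with
`Q(A·x) = c·Q(x)` for all `x`, for some `c ∈ K*`. -/
def similitudeGroup (K : Type*) [Field K] : Subgroup (GL (Fin 3) K) where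
  carrier := {A | ∃ c : K, c ≠ 0 ∧
    ∀ x : Fin 3 → K, quadForm K ((A : Matrix (Fin 3) (Fin 3) K).mulVec x) = c * quadForm K x}
  mul_mem' := by
    rintro A B ⟨c, hc, hA⟩ ⟨d, hd, hB⟩
    refine ⟨c * d, mul_ne_zero hc hd, fun x => ?_⟩
    have h : ((A * B : GL (Fin 3) K) : Matrix (Fin 3) (Fin 3) K)
        = (A : Matrix (Fin 3) (Fin 3) K) * (B : Matrix (Fin 3) (Fin 3) K) := rfl
    rw [h, ← Matrix.mulVec_mulVec, hA, hB, mul_assoc]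
  one_mem' := ⟨1, one_ne_zero, fun x => by
    have h : ((1 : GL (Fin 3) K) : Matrix (Fin 3) (Fin 3) K) = 1 := rfl
    rw [h, Matrix.one_mulVec, one_mul]⟩
  inv_mem' := by
    rintro A ⟨c, hc, hA⟩
    refine ⟨c⁻¹, inv_ne_zero hc, fun x => ?_⟩
    have h : (A : Matrix (Fin 3) (Fin 3) K).mulVec
        (((A⁻¹ : GL (Fin 3) K) : Matrix (Fin 3) (Fin 3) K).mulVec x) = x := by
      rw [Matrix.mulVec_mulVec]
      have : (A : Matrix (Fin 3) (Fin 3) K) * ((A⁻¹ : GL (Fin 3) K) : Matrix (Fin 3) (Fin 3) K)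
          = 1 := A.mul_inv
      rw [this, Matrix.one_mulVec]
    have h2 := hA (((A⁻¹ : GL (Fin 3) K) : Matrix (Fin 3) (Fin 3) K).mulVec x)
    rw [h] at h2
    field_simp [h2]
    rw [h2, mul_comm]
  
/-- The subgroup of nonzero scalar matrices inside `GL(3,K)`. -/
def scalarSubgroup (K : Type*) [Field K] : Subgroup (GL (Fin 3) K) where
  carrier := {A | ∃ μ : K, μ ≠ 0 ∧ (A : Matrix (Fin 3) (Fin 3) K) = μ • (1 : Matrix (Fin 3) (Fin 3) K)}
  mul_mem' := by
    rintro A B ⟨μ, hμ, hA⟩ ⟨ν, hν, hB⟩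
    refine ⟨μ * ν, mul_ne_zero hμ hν, ?_⟩
    have h : ((A * B : GL (Fin 3) K) : Matrix (Fin 3) (Fin 3) K)
        = (A : Matrix (Fin 3) (Fin 3) K) * (B : Matrix (Fin 3) (Fin 3) K) := rfl
    rw [h, hA, hB, smul_mul_smul_comm, one_mul]
  one_mem' := ⟨1, one_ne_zero, by simp⟩
  inv_mem' := by
    rintro A ⟨μ, hμ, hA⟩
    refine ⟨μ⁻¹, inv_ne_zero hμ, ?_⟩
    have h : ((A⁻¹ : GL (Fin 3) K) : Matrix (Fin 3) (Fin 3) K)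
        = (A : Matrix (Fin 3) (Fin 3) K)⁻¹ := (Matrix.coe_units_inv A)
    rw [h, hA]
    exact Matrix.inv_eq_left_inv
      (by rw [smul_mul_smul_comm, one_mul, inv_mul_cancel₀ hμ, one_smul])
  

/-- The subgroup of `GL(3,K)` fixing the projective point `[x]`, i.e. those `A` with
`A·x = λ·x` for some `λ ∈ K*`. -/
def pointStabilizer (K : Type*) [Field K] (x : Fin 3 → K) : Subgroup (GL (Fin 3) K) where
  carrier := {A | ∃ lam : K, lam ≠ 0 ∧ (A : Matrix (Fin 3) (Fin 3) K).mulVec x = lam • x}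
  mul_mem' := by
    rintro A B ⟨a, ha, hA⟩ ⟨b, hb, hB⟩
    refine ⟨a * b, mul_ne_zero ha hb, ?_⟩
    have h : ((A * B : GL (Fin 3) K) : Matrix (Fin 3) (Fin 3) K)
        = (A : Matrix (Fin 3) (Fin 3) K) * (B : Matrix (Fin 3) (Fin 3) K) := rfl
    rw [h, ← Matrix.mulVec_mulVec, hB, Matrix.mulVec_smul, hA, smul_smul, mul_comm]
  one_mem' := ⟨1, one_ne_zero, by simp [Matrix.one_mulVec]⟩
  inv_mem' := by
    rintro A ⟨a, ha, hA⟩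
    refine ⟨a⁻¹, inv_ne_zero ha, ?_⟩
    have h : ((A⁻¹ : GL (Fin 3) K) : Matrix (Fin 3) (Fin 3) K).mulVec
        ((A : Matrix (Fin 3) (Fin 3) K).mulVec x) = x := by
      rw [Matrix.mulVec_mulVec]
      have h1 : ((A⁻¹ : GL (Fin 3) K) : Matrix (Fin 3) (Fin 3) K)
          * (A : Matrix (Fin 3) (Fin 3) K) = 1 := A.inv_mul
      rw [h1, Matrix.one_mulVec]
    rw [hA, Matrix.mulVec_smul] at h
    exact (eq_inv_smul_iff₀ ha).2 h

/-- The subgroup of `GL(3,K)` consisting of the similitudes of `Q` fixing the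
projective point `[x]`. -/
def similitudePointStabilizer (K : Type*) [Field K] (x : Fin 3 → K) :
    Subgroup (GL (Fin 3) K) :=
  pointStabilizer K x ⊓ similitudeGroup K


section Main
variable {K : Type*} [Field K]

theorem q_ne_zero (q : K) (hq : ¬ IsSquare (-q)) : q ≠ 0 := fun h => hq ⟨0, by simp [h]⟩

theorem x0_ne (x : Fin 3 → K) (hq : ¬ IsSquare (-(quadForm K x))) : x 0 ≠ 0 := by
  intro h
  exact hq ⟨x 2, by show -(x 0 * x 1 - x 2 ^ 2) = x 2 * x 2; rw [h]; ring⟩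

theorem x1_ne (x : Fin 3 → K) (hq : ¬ IsSquare (-(quadForm K x))) : x 1 ≠ 0 := by
  intro h
  exact hq ⟨x 2, by show -(x 0 * x 1 - x 2 ^ 2) = x 2 * x 2; rw [h]; ring⟩

/-- matrix with columns `x`, `e₁`, `e₂` (an orthogonal basis adapted to `x`). -/
def Pmat (x : Fin 3 → K) : Matrix (Fin 3) (Fin 3) K :=
  !![x 0, x 0, x 0 * x 2;
     x 1, -(x 1), x 1 * x 2;
     x 2, 0, x 0 * x 1]

/-- the model for elements of the stabilizer, in the adapted basis. -/
def Dmat (q lam a b : K) (ε : Bool) : Matrix (Fin 3) (Fin 3) K :=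
  !![lam, 0, 0;
     0, a, if ε then q * b else -(q * b);
     0, b, if ε then -a else a]

/-- the quadratic form in the adapted coordinates -/
def Fq (q x0 x1 : K) (y : Fin 3 → K) : K :=
  q * y 0 ^ 2 - x0 * x1 * (y 1 ^ 2 + q * y 2 ^ 2)

theorem det_Pmat (x : Fin 3 → K) :
    (Pmat x).det = -(2 * x 0 * x 1 * quadForm K x) := by
  simp [Pmat, Matrix.det_fin_three, quadForm]; ring

theorem quadForm_P_mulVec (x : Fin 3 → K) (y : Fin 3 → K) :
    quadForm K ((Pmat x).mulVec y) = Fq (quadForm K x) (x 0) (x 1) y := by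
  simp [quadForm, Fq, Pmat, Matrix.mulVec, dotProduct, Fin.sum_univ_three]; ring

theorem Fq_D_mulVec (q x0 x1 lam a b : K) (ε : Bool) (hN : a ^ 2 + q * b ^ 2 = lam ^ 2)
    (y : Fin 3 → K) :
    Fq q x0 x1 ((Dmat q lam a b ε).mulVec y) = lam ^ 2 * Fq q x0 x1 y := by
  cases ε <;>
  · simp [Fq, Dmat, Matrix.mulVec, dotProduct, Fin.sum_univ_three]
    linear_combination (-(x0 * x1) * (y 1 ^ 2 + q * y 2 ^ 2)) * hN

theorem det_Dmat (q lam a b : K) (ε : Bool) (hN : a ^ 2 + q * b ^ 2 = lam ^ 2)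
    (hlam : lam ≠ 0) : (Dmat q lam a b ε).det ≠ 0 := by
  cases ε
  · have h : (Dmat q lam a b false).det = lam * (a ^ 2 + q * b ^ 2) := by
      simp [Dmat, Matrix.det_fin_three]; ring
    rw [h, hN]
    exact mul_ne_zero hlam (pow_ne_zero _ hlam)
  · have h : (Dmat q lam a b true).det = -(lam * (a ^ 2 + q * b ^ 2)) := by
      simp [Dmat, Matrix.det_fin_three]; ring
    rw [h, hN]
    exact neg_ne_zero.2 (mul_ne_zero hlam (pow_ne_zero _ hlam))

/-- the parameter space -/
def Par (q : K) : Type _ :=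
  {p : K × (K × K) × Bool // p.1 ≠ 0 ∧ p.2.1.1 ^ 2 + q * p.2.1.2 ^ 2 = p.1 ^ 2}

noncomputable def Pu (x : Fin 3 → K) (h2 : (2:K) ≠ 0)
    (hq : ¬ IsSquare (-(quadForm K x))) : GL (Fin 3) K :=
  Matrix.GeneralLinearGroup.mkOfDetNeZero (Pmat x) (by
    rw [det_Pmat]
    exact neg_ne_zero.2 (mul_ne_zero (mul_ne_zero (mul_ne_zero h2 (x0_ne x hq)) (x1_ne x hq))
      (q_ne_zero _ hq)))

theorem Pu_val (x : Fin 3 → K) (h2 : (2:K) ≠ 0) (hq : ¬ IsSquare (-(quadForm K x))) :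
    (Pu x h2 hq : Matrix (Fin 3) (Fin 3) K) = Pmat x := rfl

noncomputable def Du (q lam a b : K) (ε : Bool) (hN : a ^ 2 + q * b ^ 2 = lam ^ 2)
    (hlam : lam ≠ 0) : GL (Fin 3) K :=
  Matrix.GeneralLinearGroup.mkOfDetNeZero (Dmat q lam a b ε) (det_Dmat q lam a b ε hN hlam)

theorem Du_val (q lam a b : K) (ε : Bool) (hN : a ^ 2 + q * b ^ 2 = lam ^ 2) (hlam : lam ≠ 0) :
    (Du q lam a b ε hN hlam : Matrix (Fin 3) (Fin 3) K) = Dmat q lam a b ε := rfl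

noncomputable def theta (x : Fin 3 → K) (h2 : (2:K) ≠ 0)
    (hq : ¬ IsSquare (-(quadForm K x))) (p : Par (quadForm K x)) : GL (Fin 3) K :=
  Pu x h2 hq *
    Du (quadForm K x) p.1.1 p.1.2.1.1 p.1.2.1.2 p.1.2.2 p.2.2 p.2.1 *
      (Pu x h2 hq)⁻¹

theorem Pmat_mulVec_single (x : Fin 3 → K) :
    (Pmat x).mulVec (Pi.single (0 : Fin 3) (1:K)) = x := by
  rw [Matrix.mulVec_single]
  funext i
  fin_cases i <;> simp [Pmat]

theorem inv_Pu_mulVec_x (x : Fin 3 → K) (h2 : (2:K) ≠ 0)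
    (hq : ¬ IsSquare (-(quadForm K x))) :
    ((Pu x h2 hq)⁻¹ : GL (Fin 3) K).val.mulVec x = Pi.single (0 : Fin 3) (1:K) := by
  have h : (Pu x h2 hq).val.mulVec (Pi.single (0 : Fin 3) (1:K)) = x := by
    rw [Pu_val]; exact Pmat_mulVec_single x
  calc ((Pu x h2 hq)⁻¹ : GL (Fin 3) K).val.mulVec x
      = ((Pu x h2 hq)⁻¹ : GL (Fin 3) K).val.mulVec
          ((Pu x h2 hq).val.mulVec (Pi.single (0 : Fin 3) (1:K))) := by rw [h]
    _ = Pi.single (0 : Fin 3) (1:K) := by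
        rw [Matrix.mulVec_mulVec, Units.inv_mul, Matrix.one_mulVec]

theorem Dmat_mulVec_single (q lam a b : K) (ε : Bool) :
    (Dmat q lam a b ε).mulVec (Pi.single (0 : Fin 3) (1:K)) = lam • (Pi.single (0 : Fin 3) (1:K) : Fin 3 → K) := by
  rw [Matrix.mulVec_single]
  funext i
  fin_cases i <;> cases ε <;> simp [Dmat, Pi.single_apply, Matrix.vecHead, Matrix.vecTail]

end Main

section Mem
variable {K : Type*} [Field K]

theorem theta_mem (x : Fin 3 → K) (h2 : (2:K) ≠ 0) (hq : ¬ IsSquare (-(quadForm K x)))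
    (p : Par (quadForm K x)) : theta x h2 hq p ∈ similitudePointStabilizer K x := by
  obtain ⟨⟨lam, w, ε⟩, hlam, hN⟩ := p
  obtain ⟨a, b⟩ := w
  rw [similitudePointStabilizer, Subgroup.mem_inf]
  have hval : (theta x h2 hq ⟨(lam, (a, b), ε), hlam, hN⟩ : Matrix (Fin 3) (Fin 3) K)
      = Pmat x * Dmat (quadForm K x) lam a b ε * ((Pu x h2 hq)⁻¹ : GL (Fin 3) K).val := rfl
  constructor
  · refine ⟨lam, hlam, ?_⟩
    rw [hval, ← Matrix.mulVec_mulVec, ← Matrix.mulVec_mulVec, inv_Pu_mulVec_x,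
      Dmat_mulVec_single, Matrix.mulVec_smul, Pmat_mulVec_single]
  · refine ⟨lam ^ 2, pow_ne_zero _ hlam, fun v => ?_⟩
    have hy : (Pu x h2 hq).val.mulVec (((Pu x h2 hq)⁻¹ : GL (Fin 3) K).val.mulVec v) = v := by
      rw [Matrix.mulVec_mulVec, Units.mul_inv, Matrix.one_mulVec]
    rw [hval, ← Matrix.mulVec_mulVec, ← Matrix.mulVec_mulVec]
    set y := ((Pu x h2 hq)⁻¹ : GL (Fin 3) K).val.mulVec v with hy'
    rw [quadForm_P_mulVec, Fq_D_mulVec _ _ _ _ _ _ _ hN, ← quadForm_P_mulVec]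
    rw [show (Pmat x).mulVec y = v from by rw [hy', ← Pu_val x h2 hq]; exact hy]

theorem theta_inj (x : Fin 3 → K) (h2 : (2:K) ≠ 0) (hq : ¬ IsSquare (-(quadForm K x))) :
    Function.Injective (theta x h2 hq) := by
  rintro ⟨⟨lam, ⟨a, b⟩, ε⟩, hlam, hN⟩ ⟨⟨lam', ⟨a', b'⟩, ε'⟩, hlam', hN'⟩ h
  have hth1 : theta x h2 hq ⟨(lam, (a, b), ε), hlam, hN⟩
      = Pu x h2 hq * Du (quadForm K x) lam a b ε hN hlam * (Pu x h2 hq)⁻¹ := rfl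
  have hth2 : theta x h2 hq ⟨(lam', (a', b'), ε'), hlam', hN'⟩
      = Pu x h2 hq * Du (quadForm K x) lam' a' b' ε' hN' hlam' * (Pu x h2 hq)⁻¹ := rfl
  rw [hth1, hth2] at h
  have hD : Du (quadForm K x) lam a b ε hN hlam = Du (quadForm K x) lam' a' b' ε' hN' hlam' :=
    mul_left_cancel (mul_right_cancel h)
  have hDval : Dmat (quadForm K x) lam a b ε = Dmat (quadForm K x) lam' a' b' ε' := by
    have := congrArg (Units.val) hD
    rwa [Du_val, Du_val] at this
  have he : ∀ i j, Dmat (quadForm K x) lam a b ε i j = Dmat (quadForm K x) lam' a' b' ε' i j :=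
    fun i j => by rw [hDval]
  have h00 : lam = lam' := by simpa [Dmat] using he 0 0
  have h11 : a = a' := by simpa [Dmat] using he 1 1
  have h21 : b = b' := by simpa [Dmat] using he 2 1
  have hee : ε = ε' := by
    by_contra hne
    cases ε <;> cases ε' <;> simp at hne <;> subst lam a b <;> simp only [Dmat] at hDval
    all_goals {
      have h12 : -(quadForm K x * b') = quadForm K x * b' ∨
          quadForm K x * b' = -(quadForm K x * b') := by
        have := congrFun (congrFun hDval 1) 2
        simp at this
        tauto
      have h22 : (a' : K) = -a' ∨ -a' = (a' : K) := by
        have := congrFun (congrFun hDval 2) 2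
        simp at this
        tauto
      have ha : a' = 0 := by
        have h' : (2:K) * a' = 0 := by
          rcases h22 with h' | h' <;> first | linear_combination h' | linear_combination -h'
        exact (mul_eq_zero.mp h').resolve_left h2
      have hb : b' = 0 := by
        have h' : (2:K) * (quadForm K x * b') = 0 := by
          rcases h12 with h' | h' <;> first | linear_combination h' | linear_combination -h'
        rcases mul_eq_zero.mp h' with h' | h'
        · exact absurd h' h2
        · exact (mul_eq_zero.mp h').resolve_left (q_ne_zero _ hq)
      rw [ha, hb] at hN'
      simp at hN'
      exact hlam' (pow_eq_zero_iff two_ne_zero |>.mp hN'.symm)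
    }
  subst h00; subst h11; subst h21; subst hee
  rfl
end Mem

section Surj
variable {K : Type*} [Field K]

theorem theta_surj (x : Fin 3 → K) (h2 : (2:K) ≠ 0) (hq : ¬ IsSquare (-(quadForm K x)))
    (A : GL (Fin 3) K) (hA : A ∈ similitudePointStabilizer K x) :
    ∃ p : Par (quadForm K x), theta x h2 hq p = A := by
  set q := quadForm K x with hqdef
  have hqne : q ≠ 0 := q_ne_zero _ hq
  have hx0 : x 0 ≠ 0 := x0_ne x hq
  have hx1 : x 1 ≠ 0 := x1_ne x hq
  have hx01 : x 0 * x 1 ≠ 0 := mul_ne_zero hx0 hx1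
  rw [similitudePointStabilizer, Subgroup.mem_inf] at hA
  obtain ⟨⟨lam, hlam, hstab⟩, ⟨c, hc, hsim⟩⟩ := hA
  have hxq : quadForm K (lam • x) = lam ^ 2 * q := by
    simp [quadForm, hqdef]; ring
  have hc2 : c = lam ^ 2 := by
    have h := hsim x
    rw [hstab, hxq] at h
    exact (mul_right_cancel₀ hqne h).symm
  subst hc2
  set Dm : Matrix (Fin 3) (Fin 3) K :=
    ((Pu x h2 hq)⁻¹ : GL (Fin 3) K).val * (A : Matrix (Fin 3) (Fin 3) K) * (Pu x h2 hq).val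
    with hDm
  have hPD : (Pu x h2 hq).val * Dm = (A : Matrix (Fin 3) (Fin 3) K) * (Pu x h2 hq).val := by
    rw [hDm, ← mul_assoc, ← mul_assoc, Units.mul_inv, one_mul]
  have hcol0 : Dm.mulVec (Pi.single (0 : Fin 3) (1:K))
      = lam • (Pi.single (0 : Fin 3) (1:K) : Fin 3 → K) := by
    rw [hDm, ← Matrix.mulVec_mulVec, ← Matrix.mulVec_mulVec,
      show (Pu x h2 hq).val.mulVec (Pi.single (0 : Fin 3) (1:K)) = x from by
        rw [Pu_val]; exact Pmat_mulVec_single x,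
      hstab, Matrix.mulVec_smul, inv_Pu_mulVec_x]
  have hFq : ∀ y, Fq q (x 0) (x 1) (Dm.mulVec y) = lam ^ 2 * Fq q (x 0) (x 1) y := by
    intro y
    have step : (Pmat x).mulVec (Dm.mulVec y)
        = (A : Matrix (Fin 3) (Fin 3) K).mulVec ((Pmat x).mulVec y) := by
      rw [Matrix.mulVec_mulVec, Matrix.mulVec_mulVec, ← Pu_val x h2 hq, hPD]
    rw [hqdef, ← quadForm_P_mulVec, step, hsim, quadForm_P_mulVec]
  -- entries of column 0
  rw [Matrix.mulVec_single] at hcol0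
  have hd00 : Dm 0 0 = lam := by have := congrFun hcol0 0; simpa using this
  have hd10 : Dm 1 0 = 0 := by have := congrFun hcol0 1; simpa using this
  have hd20 : Dm 2 0 = 0 := by have := congrFun hcol0 2; simpa using this
  have E1 := hFq ![0,1,0]
  have E2 := hFq ![0,0,1]
  have E01 := hFq ![1,1,0]
  have E02 := hFq ![1,0,1]
  have E12 := hFq ![0,1,1]
  simp only [Fq, Matrix.mulVec, dotProduct, Fin.sum_univ_three, Matrix.cons_val_zero,
    Matrix.cons_val_one, Matrix.head_cons, Matrix.cons_val_two, Matrix.tail_cons,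
    hd00, hd10, hd20, mul_zero, mul_one, zero_add, add_zero, zero_mul] at E1 E2 E01 E02 E12
  have hd01 : Dm 0 1 = 0 := by
    have h01 : (2 * q * lam) * Dm 0 1 = 0 := by linear_combination E01 - E1
    simpa [mul_eq_zero, h2, hqne, hlam] using h01
  have hd02 : Dm 0 2 = 0 := by
    have h02 : (2 * q * lam) * Dm 0 2 = 0 := by linear_combination E02 - E2
    simpa [mul_eq_zero, h2, hqne, hlam] using h02
  rw [hd01] at E1 E12
  rw [hd02] at E2 E12
  have hN : Dm 1 1 ^ 2 + q * Dm 2 1 ^ 2 = lam ^ 2 := by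
    apply mul_left_cancel₀ hx01
    linear_combination -E1
  have hE : Dm 1 2 ^ 2 + q * Dm 2 2 ^ 2 = q * lam ^ 2 := by
    apply mul_left_cancel₀ hx01
    linear_combination -E2
  have hO : Dm 1 1 * Dm 1 2 + q * Dm 2 1 * Dm 2 2 = 0 := by
    have h' : (x 0 * x 1) * (2 * (Dm 1 1 * Dm 1 2 + q * Dm 2 1 * Dm 2 2)) = 0 := by
      linear_combination E1 + E2 - E12
    rcases mul_eq_zero.mp h' with h' | h'
    · exact absurd h' hx01
    · exact (mul_eq_zero.mp h').resolve_left h2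
  set a := Dm 1 1 with hadef
  set b := Dm 2 1 with hbdef
  set e := Dm 1 2 with hedef
  set f := Dm 2 2 with hfdef
  have hq4 : q * ((a * f - b * e) ^ 2 - (lam ^ 2) ^ 2) = 0 := by
    linear_combination (e ^ 2 + q * f ^ 2) * hN + lam ^ 2 * hE - (a * e + q * b * f) * hO
  have hsq : (a * f - b * e - lam ^ 2) * (a * f - b * e + lam ^ 2) = 0 := by
    have h'' := (mul_eq_zero.mp hq4).resolve_left hqne
    linear_combination h''
  have hlam2 : lam ^ 2 ≠ 0 := pow_ne_zero _ hlam
  have key : (e = -(q * b) ∧ f = a) ∨ (e = q * b ∧ f = -a) := by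
    rcases mul_eq_zero.mp hsq with hcase | hcase
    · have h1 : a * f - b * e = lam ^ 2 := by linear_combination hcase
      left
      constructor
      · exact mul_right_cancel₀ hlam2 (by linear_combination a * hO - q * b * h1 - e * hN)
      · exact mul_right_cancel₀ hlam2 (by linear_combination b * hO + a * h1 - f * hN)
    · have h1 : a * f - b * e = -(lam ^ 2) := by linear_combination hcase
      right
      constructor
      · exact mul_right_cancel₀ hlam2 (by linear_combination a * hO - q * b * h1 - e * hN)
      · exact mul_right_cancel₀ hlam2 (by linear_combination b * hO + a * h1 - f * hN)
  have hNpar : a ^ 2 + q * b ^ 2 = lam ^ 2 := by linear_combination hN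
  have final : ∀ ε : Bool, Dm = Dmat q lam a b ε →
      ∃ p : Par (quadForm K x), theta x h2 hq p = A := by
    intro ε hDmEq
    refine ⟨⟨(lam, (a, b), ε), hlam, hNpar⟩, ?_⟩
    apply Units.ext
    have hval : (theta x h2 hq ⟨(lam, (a, b), ε), hlam, hNpar⟩ : Matrix (Fin 3) (Fin 3) K)
        = Pmat x * Dmat q lam a b ε * ((Pu x h2 hq)⁻¹ : GL (Fin 3) K).val := rfl
    rw [hval, ← hDmEq, ← Pu_val x h2 hq, hPD, mul_assoc, Units.mul_inv, mul_one]
  rcases key with ⟨he', hf'⟩ | ⟨he', hf'⟩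
  · apply final false
    ext i j
    fin_cases i <;> fin_cases j <;>
      simp [Dmat, hd00, hd01, hd02, hd10, hd20, ← hadef, ← hbdef, ← hedef, ← hfdef, he', hf', Matrix.vecHead, Matrix.vecTail]
  · apply final true
    ext i j
    fin_cases i <;> fin_cases j <;>
      simp [Dmat, hd00, hd01, hd02, hd10, hd20, ← hadef, ← hbdef, ← hedef, ← hfdef, he', hf', Matrix.vecHead, Matrix.vecTail]
end Surj

section Count
variable {K : Type*} [Field K]

theorem one_add_q_sq_ne (q : K) (hq : ¬ IsSquare (-q)) (t : K) : 1 + q * t ^ 2 ≠ 0 := by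
  intro h
  rcases eq_or_ne t 0 with rfl | ht
  · simp at h
  · exact hq ⟨t⁻¹, by field_simp; linear_combination -h⟩

noncomputable def circleEquiv (q : K) (h2 : (2:K) ≠ 0) (hq : ¬ IsSquare (-q)) :
    Option K ≃ {p : K × K // p.1 ^ 2 + q * p.2 ^ 2 = 1} where
  toFun := fun o => o.elim ⟨(-1, 0), by simp⟩ (fun t =>
    ⟨((1 - q * t ^ 2) / (1 + q * t ^ 2), 2 * t / (1 + q * t ^ 2)), by
        have h := one_add_q_sq_ne q hq t
        field_simp
        ring⟩)
  invFun := fun p => if p.val.1 = -1 then none else some (p.val.2 / (1 + p.val.1))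
  left_inv := by
    rintro (_ | t)
    · simp [Option.elim]
    · have h := one_add_q_sq_ne q hq t
      have hne : (1 - q * t ^ 2) / (1 + q * t ^ 2) ≠ -1 := by
        intro hcon
        rw [div_eq_iff h] at hcon
        exact h2 (by linear_combination hcon)
      simp only [Option.elim, hne, if_false, Option.some.injEq]
      have hD : 1 + (1 - q * t ^ 2) / (1 + q * t ^ 2) = 2 / (1 + q * t ^ 2) := by
        field_simp; ring
      rw [hD]
      field_simp
      exact mul_div_cancel_right₀ t (by rw [mul_comm (t ^ 2)]; exact h)
  right_inv := by
    rintro ⟨⟨a, b⟩, hab⟩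
    simp only at hab
    rcases eq_or_ne a (-1) with rfl | ha
    · have hb : b = 0 := by
        have h : q * b ^ 2 = 0 := by linear_combination hab
        rcases mul_eq_zero.mp h with h | h
        · exact absurd h (q_ne_zero q hq)
        · exact pow_eq_zero_iff two_ne_zero |>.mp h
      simp only [if_pos rfl, Option.elim]
      exact Subtype.ext (by simp [hb])
    · have h1a : 1 + a ≠ 0 := fun h => ha (by linear_combination h)
      have key : 1 + q * (b / (1 + a)) ^ 2 = 2 / (1 + a) := by
        field_simp
        linear_combination hab
      simp only [if_neg ha, Option.elim]
      refine Subtype.ext (Prod.ext ?_ ?_) <;> simp only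
      · rw [key]
        field_simp
        linear_combination (-1) * hab
      · rw [key]
        field_simp

noncomputable def parEquiv (q : K) :
    Par q ≃ Kˣ × {p : K × K // p.1 ^ 2 + q * p.2 ^ 2 = 1} × Bool where
  toFun p := (Units.mk0 p.1.1 p.2.1,
    ⟨(p.1.2.1.1 / p.1.1, p.1.2.1.2 / p.1.1), by
      have h := p.2.2
      have hl := p.2.1
      field_simp
      linear_combination h⟩, p.1.2.2)
  invFun t := ⟨(t.1.val, (t.1.val * t.2.1.val.1, t.1.val * t.2.1.val.2), t.2.2), t.1.ne_zero, by
    have h := t.2.1.2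
    linear_combination (t.1.val ^ 2) * h⟩
  left_inv p := by
    obtain ⟨⟨lam, ⟨a, b⟩, ε⟩, hlam, h⟩ := p
    refine Subtype.ext ?_
    simp only [Units.val_mk0]
    refine Prod.ext rfl (Prod.ext ?_ rfl)
    field_simp
  right_inv t := by
    obtain ⟨u, ⟨⟨a, b⟩, h⟩, ε⟩ := t
    refine Prod.ext ?_ (Prod.ext ?_ rfl)
    · exact Units.ext (by simp)
    · refine Subtype.ext ?_
      have hu : (u : K) ≠ 0 := u.ne_zero
      simp only
      refine Prod.ext ?_ ?_ <;> simp only <;> field_simp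

theorem card_Par [Fintype K] (q : K) (h2 : (2:K) ≠ 0) (hq : ¬ IsSquare (-q)) :
    Nat.card (Par q) = (Fintype.card K - 1) * ((Fintype.card K + 1) * 2) := by
  rw [Nat.card_congr (parEquiv q), Nat.card_prod, Nat.card_prod,
    Nat.card_congr (circleEquiv q h2 hq).symm]
  simp only [Nat.card_eq_fintype_card, Fintype.card_option, Fintype.card_units,
    Nat.card_eq_two_iff]
  simp [Fintype.card_option]

end Count

section Scalar
variable {K : Type*} [Field K]

theorem quadForm_smul (t : K) (v : Fin 3 → K) :
    quadForm K (t • v) = t ^ 2 * quadForm K v := by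
  simp [quadForm]; ring

def scalarGL (μ : Kˣ) : GL (Fin 3) K :=
  ⟨(μ : K) • 1, ((μ⁻¹ : Kˣ) : K) • 1,
    by rw [smul_mul_smul_comm, one_mul, ← Units.val_mul, mul_inv_cancel, Units.val_one, one_smul],
    by rw [smul_mul_smul_comm, one_mul, ← Units.val_mul, inv_mul_cancel, Units.val_one, one_smul]⟩

theorem scalarGL_val (μ : Kˣ) :
    (scalarGL μ : Matrix (Fin 3) (Fin 3) K) = (μ : K) • 1 := rfl

theorem scalarGL_mem (x : Fin 3 → K) (μ : Kˣ) :
    scalarGL μ ∈ similitudePointStabilizer K x := by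
  rw [similitudePointStabilizer, Subgroup.mem_inf]
  constructor
  · exact ⟨(μ : K), μ.ne_zero, by
      rw [scalarGL_val, Matrix.smul_mulVec, Matrix.one_mulVec]⟩
  · refine ⟨(μ : K) ^ 2, pow_ne_zero _ μ.ne_zero, fun v => ?_⟩
    rw [scalarGL_val, Matrix.smul_mulVec, Matrix.one_mulVec, quadForm_smul]

theorem card_scalar (x : Fin 3 → K) [Fintype K] :
    Nat.card ((scalarSubgroup K).subgroupOf (similitudePointStabilizer K x))
      = Fintype.card K - 1 := by
  have : Nat.card Kˣ = Fintype.card K - 1 := by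
    rw [Nat.card_units, Nat.card_eq_fintype_card]
  rw [← this]
  refine (Nat.card_congr (Equiv.ofBijective
    (fun μ : Kˣ => (⟨⟨scalarGL μ, scalarGL_mem x μ⟩, by
      rw [Subgroup.mem_subgroupOf]
      exact ⟨(μ : K), μ.ne_zero, rfl⟩⟩ :
        (scalarSubgroup K).subgroupOf (similitudePointStabilizer K x))) ⟨?_, ?_⟩)).symm
  · intro μ ν h
    have hval : (scalarGL (K := K) μ : Matrix (Fin 3) (Fin 3) K)
        = (scalarGL ν : Matrix (Fin 3) (Fin 3) K) :=
      congrArg Units.val (Subtype.ext_iff.mp (Subtype.ext_iff.mp h))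
    rw [scalarGL_val, scalarGL_val] at hval
    have := congrFun (congrFun hval 0) 0
    simp at this
    exact Units.ext this
  · rintro ⟨⟨A, hAS⟩, hAmem⟩
    rw [Subgroup.mem_subgroupOf] at hAmem
    obtain ⟨μ, hμ, hval⟩ := hAmem
    refine ⟨Units.mk0 μ hμ, ?_⟩
    refine Subtype.ext (Subtype.ext (Units.ext ?_))
    simpa [scalarGL_val] using hval.symm

end Scalar

/-- Let `x` be an internal point of the conic `C`, i.e. `−Q(x)` is a nonsquare in `K`.
The subgroup of the group of similitudes of `Q` modulo scalar matrices fixing the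
projective point `[x]` has order `2·(s + 1)`, where `s` is the (odd) order of `K`. -/
theorem card_similitude_stabilizer_of_internal_point_mod_scalars
    (K : Type*) [Field K] [Fintype K] (hodd : Odd (Fintype.card K))
    (x : Fin 3 → K) (hx : ¬ IsSquare (-(quadForm K x))) :
    Nat.card (similitudePointStabilizer K x ⧸
        (scalarSubgroup K).subgroupOf (similitudePointStabilizer K x)) =
      2 * (Fintype.card K + 1) := by
  have h2 : (2:K) ≠ 0 := by
    have hchar : ringChar K ≠ 2 := by
      intro h
      have heven := FiniteField.even_card_iff_char_two.mp h
      have hoddn := Nat.odd_iff.mp hodd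
      omega
    exact Ring.two_ne_zero hchar
  have hS : Nat.card (similitudePointStabilizer K x)
      = (Fintype.card K - 1) * ((Fintype.card K + 1) * 2) := by
    rw [← card_Par (quadForm K x) h2 hx]
    refine (Nat.card_congr (Equiv.ofBijective
      (fun p : Par (quadForm K x) =>
        (⟨theta x h2 hx p, theta_mem x h2 hx p⟩ : similitudePointStabilizer K x))
      ⟨?_, ?_⟩)).symm
    · intro p p' h
      exact theta_inj x h2 hx (Subtype.ext_iff.mp h)
    · rintro ⟨A, hA⟩
      obtain ⟨p, hp⟩ := theta_surj x h2 hx A hA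
      exact ⟨p, Subtype.ext hp⟩
  have hform := Subgroup.card_eq_card_quotient_mul_card_subgroup
    ((scalarSubgroup K).subgroupOf (similitudePointStabilizer K x))
  rw [hS, card_scalar x] at hform
  have hpos : 0 < Fintype.card K - 1 := by
    have := Fintype.one_lt_card (α := K)
    omega
  apply Nat.eq_of_mul_eq_mul_right hpos
  rw [← hform]
  ring
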